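/- Let w_1,…,w_M be strictly positive real numbers and let N be a real number with 0 < N < M. Then there exists λ > 0 such that Σ_{i=1}^M min(√(w_i/λ), 1) = N. (Existence of the threshold λ in the Chi-Squared Optimal Selection (CS-OS) resampling scheme.) -/

import Mathlib

/-- **Existence of the CS-OS threshold.**  For strictly positive weights `w_1,…,w_M` and
`0 < N < M` there is `λ > 0` with `Σ_i min(√(w_i/λ), 1) = N`. -/
theorem csos_threshold_exists {M : ℕ} (w : Fin M → ℝ) (hw : ∀ i, 0 < w i)
    (N : ℝ) (hN0 : 0 < N) (hNM : N < M) :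
    ∃ lam : ℝ, 0 < lam ∧ (∑ i, min (Real.sqrt (w i / lam)) 1) = N := by
  have hM : 0 < M := by exact_mod_cast Nat.cast_pos.mp (hN0.trans hNM)
  haveI : Nonempty (Fin M) := Fin.pos_iff_nonempty.mp hM
  have hMR : (0:ℝ) < M := hN0.trans hNM
  set f : ℝ → ℝ := fun lam => ∑ i, min (Real.sqrt (w i / lam)) 1 with hf
  set a : ℝ := Finset.univ.inf' Finset.univ_nonempty w with hadef
  have ha : 0 < a := by
    rw [hadef, Finset.lt_inf'_iff]
    exact fun i _ => hw i
  have ha_le : ∀ i, a ≤ w i := fun i =>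
    Finset.inf'_le _ (Finset.mem_univ i)
  set c : ℝ := Finset.univ.sup' Finset.univ_nonempty w with hcdef
  have hc_le : ∀ i, w i ≤ c := fun i => Finset.le_sup' _ (Finset.mem_univ i)
  have hac : a ≤ c := (ha_le (Classical.arbitrary _)).trans (hc_le _)
  have hc : 0 < c := ha.trans_le hac
  set b : ℝ := c * (2 * M / N) ^ 2 with hbdef
  have hfac : (1:ℝ) ≤ (2 * M / N) ^ 2 := by
    have h1 : (1:ℝ) ≤ 2 * M / N := by
      rw [le_div_iff₀ hN0]
      nlinarith
    nlinarith
  have hab : a ≤ b := by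
    calc a ≤ c := hac
    _ = c * 1 := by ring
    _ ≤ b := by rw [hbdef]; exact mul_le_mul_of_nonneg_left hfac hc.le
  have hb : 0 < b := ha.trans_le hab
  -- continuity
  have hcont : ContinuousOn f (Set.Icc a b) := by
    apply continuousOn_finset_sum
    intro i _
    exact (continuous_id.min continuous_const).comp_continuousOn
      ((continuousOn_const.div continuousOn_id
        fun x hx => (ha.trans_le hx.1).ne').sqrt)
  -- f a = M
  have hfa : f a = M := by
    rw [hf]
    simp only
    have : ∀ i ∈ Finset.univ, min (Real.sqrt (w i / a)) 1 = 1 := by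
      intro i _
      rw [min_eq_right]
      rw [Real.one_le_sqrt]
      exact (one_le_div ha).mpr (ha_le i)
    rw [Finset.sum_congr rfl this]
    simp
  -- f b ≤ N / 2
  have hfb : f b ≤ N / 2 := by
    have hterm : ∀ i, min (Real.sqrt (w i / b)) 1 ≤ N / (2 * M) := by
      intro i
      have h1 : w i / b ≤ (N / (2 * M)) ^ 2 := by
        rw [hbdef, div_le_iff₀ hb]
        have : (N / (2*M))^2 * (c * (2 * M / N) ^ 2) = c := by
          field_simp
        rw [this]
        exact hc_le i
      calc min (Real.sqrt (w i / b)) 1 ≤ Real.sqrt (w i / b) := min_le_left _ _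
      _ ≤ Real.sqrt ((N / (2 * M)) ^ 2) := Real.sqrt_le_sqrt h1
      _ = N / (2 * M) := Real.sqrt_sq (by positivity)
    calc f b ≤ ∑ _i : Fin M, N / (2 * M) :=
          Finset.sum_le_sum fun i _ => hterm i
    _ = M * (N / (2 * M)) := by rw [Finset.sum_const]; simp [mul_comm]
    _ = N / 2 := by field_simp
  have hmem : N ∈ Set.Icc (f b) (f a) := by
    constructor
    · linarith
    · rw [hfa]; exact hNM.le
  obtain ⟨lam, hlam, hflam⟩ := intermediate_value_Icc' hab hcont hmem
  exact ⟨lam, ha.trans_le hlam.1, hflam⟩
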